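/- Let r and s be integers with r ≥ 1 and s ≥ 2. Then N(r,s;r,0,1,s−1) = N(r,s;r,0,s−1,1) = N(r,s;r,s−1,1,0) = N(r,s;r,1,s−1,0) = 2^s − 1. -/
import Mathlib


open Finset

/-- The Mixed Generalized Gaussian Number `N(α,β;k₀,k₁,k₂,k₃)`. -/
def MGN (a b k₀ k₁ k₂ k₃ : ℕ) : ℚ :=
  ((∏ i ∈ range k₀, ((2 ^ a - 2 ^ i : ℚ) * 2 ^ b)) *
   (∏ i ∈ range k₁, ((8 ^ b - 4 ^ b * 2 ^ i : ℚ) * 2 ^ a)) *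
   (∏ i ∈ range k₂, ((4 ^ b - 2 ^ (b + k₁ + i) : ℚ) * 2 ^ a)) *
   (∏ i ∈ range k₃, (2 ^ b - 2 ^ (k₁ + k₂ + i) : ℚ))) /
  ((∏ i ∈ range k₀, (2 ^ (k₀ + k₁ + k₂ + k₃) - 2 ^ (k₁ + k₂ + k₃ + i) : ℚ)) *
   (∏ i ∈ range k₁, ((8 ^ k₁ - 4 ^ k₁ * 2 ^ i : ℚ) * 2 ^ (k₀ + 2 * k₂ + k₃))) *
   (∏ i ∈ range k₂, ((4 ^ k₂ - 2 ^ (k₂ + i) : ℚ) * 2 ^ (k₀ + 2 * k₁ + k₃))) *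
   (∏ i ∈ range k₃, (2 ^ (k₁ + k₂ + k₃) - 2 ^ (k₁ + k₂ + i) : ℚ)))

lemma two_pow_sub_pos' {a b : ℕ} (h : a < b) : (0:ℚ) < 2^b - 2^a := by
  have := pow_lt_pow_right₀ (by norm_num : (1:ℚ) < 2) h
  linarith

lemma MGN_key_prod (n : ℕ) :
    ∏ i ∈ range (n+1), ((2:ℚ)^(n+2) - 2^i)
      = ((2:ℚ)^(n+2) - 1) * ∏ i ∈ range (n+1), ((2:ℚ)^(n+1) - 2^i) := by
  rw [prod_range_succ', prod_range_succ]
  rw [prod_congr rfl (fun i (_ : i ∈ range n) =>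
      show (2:ℚ)^(n+2) - 2^(i+1) = 2*((2:ℚ)^(n+1) - 2^i) by ring)]
  rw [prod_mul_distrib, prod_const, card_range]
  rw [show (2:ℚ)^(n+1) - 2^n = 2^n by ring]
  ring

lemma MGN_case1 (r n : ℕ) :
    MGN r (n+2) r 0 1 (n+1) = (2 : ℚ) ^ (n+2) - 1 := by
  unfold MGN
  simp only [prod_range_one, prod_range_zero, one_mul, mul_one]
  have h2 : ∏ i ∈ range r, ((2:ℚ)^(r+0+1+(n+1)) - 2^(0+1+(n+1)+i))
      = ∏ i ∈ range r, ((2^r - 2^i : ℚ) * 2^(n+2)) :=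
    prod_congr rfl fun i _ => by ring
  have h4 : ∏ i ∈ range (n+1), ((2:ℚ)^(0+1+(n+1)) - 2^(0+1+i))
      = ∏ i ∈ range (n+1), ((2:ℚ)^(n+2) - 2^(0+1+i)) :=
    prod_congr rfl fun i _ => by rw [show 0+1+(n+1) = n+2 by omega]
  rw [h2, h4]
  have hA : 0 < ∏ i ∈ range r, ((2^r - 2^i : ℚ) * 2^(n+2)) :=
    prod_pos fun i hi => mul_pos (two_pow_sub_pos' (mem_range.mp hi)) (by positivity)
  have hB : 0 < ∏ i ∈ range (n+1), ((2:ℚ)^(n+2) - 2^(0+1+i)) :=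
    prod_pos fun i hi => two_pow_sub_pos' (by have := mem_range.mp hi; omega)
  rw [div_eq_iff (by positivity)]
  rw [show (4:ℚ)^(n+2) = 2^(n+2)*2^(n+2) by rw [← mul_pow]; norm_num]
  ring

lemma MGN_case2 (r n : ℕ) :
    MGN r (n+2) r 0 (n+1) 1 = (2 : ℚ) ^ (n+2) - 1 := by
  unfold MGN
  simp only [prod_range_one, prod_range_zero, one_mul, mul_one]
  have h2 : ∏ i ∈ range r, ((2:ℚ)^(r+0+(n+1)+1) - 2^(0+(n+1)+1+i))
      = ∏ i ∈ range r, ((2^r - 2^i : ℚ) * 2^(n+2)) :=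
    prod_congr rfl fun i _ => by ring
  have h44 : ∀ m : ℕ, (4:ℚ)^m = 2^m * 2^m := fun m => by rw [← mul_pow]; norm_num
  have hnum : ∏ i ∈ range (n+1), (((4:ℚ)^(n+2) - 2^(n+2+0+i)) * 2^r)
      = ((2:ℚ)^(n+2) - 1) * (∏ i ∈ range (n+1), ((2:ℚ)^(n+1) - 2^i)) * (2^(n+2)*2^r)^(n+1) := by
    rw [show ((2:ℚ)^(n+2)*2^r)^(n+1) = ∏ _i ∈ range (n+1), ((2:ℚ)^(n+2)*2^r) by
      rw [prod_const, card_range]]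
    rw [← MGN_key_prod, ← prod_mul_distrib]
    exact prod_congr rfl fun i _ => by rw [h44]; ring
  have hden : ∏ i ∈ range (n+1), (((4:ℚ)^(n+1) - 2^(n+1+i)) * 2^(r+2*0+1))
      = (∏ i ∈ range (n+1), ((2:ℚ)^(n+1) - 2^i)) * (2^(n+2)*2^r)^(n+1) := by
    rw [show ((2:ℚ)^(n+2)*2^r)^(n+1) = ∏ _i ∈ range (n+1), ((2:ℚ)^(n+2)*2^r) by
      rw [prod_const, card_range]]
    rw [← prod_mul_distrib]
    exact prod_congr rfl fun i _ => by rw [h44]; ring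
  rw [h2, hnum, hden]
  have hA : 0 < ∏ i ∈ range r, ((2^r - 2^i : ℚ) * 2^(n+2)) :=
    prod_pos fun i hi => mul_pos (two_pow_sub_pos' (mem_range.mp hi)) (by positivity)
  have hQ : 0 < ∏ i ∈ range (n+1), ((2:ℚ)^(n+1) - 2^i) :=
    prod_pos fun i hi => two_pow_sub_pos' (mem_range.mp hi)
  have hy : (0:ℚ) < 2^(0+(n+1)+1) - 2^(0+(n+1)+0) := two_pow_sub_pos' (by omega)
  rw [div_eq_iff (by positivity)]
  rw [show 0+(n+1)+1 = n+2 by omega, show 0+(n+1)+0 = n+1 by omega]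
  ring

lemma MGN_case3 (r n : ℕ) :
    MGN r (n+2) r (n+1) 1 0 = (2 : ℚ) ^ (n+2) - 1 := by
  unfold MGN
  simp only [prod_range_one, prod_range_zero, one_mul, mul_one]
  have h2 : ∏ i ∈ range r, ((2:ℚ)^(r+(n+1)+1+0) - 2^((n+1)+1+0+i))
      = ∏ i ∈ range r, ((2^r - 2^i : ℚ) * 2^(n+2)) :=
    prod_congr rfl fun i _ => by ring
  have h8 : ∀ m : ℕ, (8:ℚ)^m = 4^m * 2^m := fun m => by rw [← mul_pow]; norm_num
  have hnum : ∏ i ∈ range (n+1), (((8:ℚ)^(n+2) - 4^(n+2)*2^i) * 2^r)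
      = ((2:ℚ)^(n+2) - 1) * (∏ i ∈ range (n+1), ((2:ℚ)^(n+1) - 2^i)) * (4^(n+2)*2^r)^(n+1) := by
    rw [show ((4:ℚ)^(n+2)*2^r)^(n+1) = ∏ _i ∈ range (n+1), ((4:ℚ)^(n+2)*2^r) by
      rw [prod_const, card_range]]
    rw [← MGN_key_prod, ← prod_mul_distrib]
    exact prod_congr rfl fun i _ => by rw [h8]; ring
  have hden : ∏ i ∈ range (n+1), (((8:ℚ)^(n+1) - 4^(n+1)*2^i) * 2^(r+2*1+0))
      = (∏ i ∈ range (n+1), ((2:ℚ)^(n+1) - 2^i)) * (4^(n+2)*2^r)^(n+1) := by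
    rw [show ((4:ℚ)^(n+2)*2^r)^(n+1) = ∏ _i ∈ range (n+1), ((4:ℚ)^(n+2)*2^r) by
      rw [prod_const, card_range]]
    rw [← prod_mul_distrib]
    exact prod_congr rfl fun i _ => by rw [h8]; ring
  rw [h2, hnum, hden]
  have hA : 0 < ∏ i ∈ range r, ((2^r - 2^i : ℚ) * 2^(n+2)) :=
    prod_pos fun i hi => mul_pos (two_pow_sub_pos' (mem_range.mp hi)) (by positivity)
  have hQ : 0 < ∏ i ∈ range (n+1), ((2:ℚ)^(n+1) - 2^i) :=
    prod_pos fun i hi => two_pow_sub_pos' (mem_range.mp hi)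
  rw [div_eq_iff (by positivity)]
  rw [show (4:ℚ)^(n+2) = 2^(n+2)*2^(n+2) by rw [← mul_pow]; norm_num]
  ring

lemma MGN_case4 (r n : ℕ) :
    MGN r (n+2) r 1 (n+1) 0 = (2 : ℚ) ^ (n+2) - 1 := by
  unfold MGN
  simp only [prod_range_one, prod_range_zero, one_mul, mul_one]
  have h2 : ∏ i ∈ range r, ((2:ℚ)^(r+1+(n+1)+0) - 2^(1+(n+1)+0+i))
      = ∏ i ∈ range r, ((2^r - 2^i : ℚ) * 2^(n+2)) :=
    prod_congr rfl fun i _ => by ring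
  have h44 : ∀ m : ℕ, (4:ℚ)^m = 2^m * 2^m := fun m => by rw [← mul_pow]; norm_num
  have hnum : ∏ i ∈ range (n+1), (((4:ℚ)^(n+2) - 2^(n+2+1+i)) * 2^r)
      = (∏ i ∈ range (n+1), ((2:ℚ)^(n+1) - 2^i)) * (2^(n+3)*2^r)^(n+1) := by
    rw [show ((2:ℚ)^(n+3)*2^r)^(n+1) = ∏ _i ∈ range (n+1), ((2:ℚ)^(n+3)*2^r) by
      rw [prod_const, card_range]]
    rw [← prod_mul_distrib]
    exact prod_congr rfl fun i _ => by rw [h44]; ring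
  have hden : ∏ i ∈ range (n+1), (((4:ℚ)^(n+1) - 2^(n+1+i)) * 2^(r+2*1+0))
      = (∏ i ∈ range (n+1), ((2:ℚ)^(n+1) - 2^i)) * (2^(n+3)*2^r)^(n+1) := by
    rw [show ((2:ℚ)^(n+3)*2^r)^(n+1) = ∏ _i ∈ range (n+1), ((2:ℚ)^(n+3)*2^r) by
      rw [prod_const, card_range]]
    rw [← prod_mul_distrib]
    exact prod_congr rfl fun i _ => by rw [h44]; ring
  rw [h2, hnum, hden]
  have hA : 0 < ∏ i ∈ range r, ((2^r - 2^i : ℚ) * 2^(n+2)) :=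
    prod_pos fun i hi => mul_pos (two_pow_sub_pos' (mem_range.mp hi)) (by positivity)
  have hQ : 0 < ∏ i ∈ range (n+1), ((2:ℚ)^(n+1) - 2^i) :=
    prod_pos fun i hi => two_pow_sub_pos' (mem_range.mp hi)
  rw [div_eq_iff (by positivity)]
  rw [show (8:ℚ)^(n+2) = 4^(n+2)*2^(n+2) by rw [← mul_pow]; norm_num,
      show (4:ℚ)^(n+2) = 2^(n+2)*2^(n+2) by rw [← mul_pow]; norm_num]
  ring

/-- `N(r,s;r,0,1,s-1) = N(r,s;r,0,s-1,1) = N(r,s;r,s-1,1,0) = N(r,s;r,1,s-1,0) = 2^s-1`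
for `r ≥ 1` and `s ≥ 2`. -/
theorem MGN_almost_full (r s : ℕ) (hr : 1 ≤ r) (hs : 2 ≤ s) :
    MGN r s r 0 1 (s - 1) = (2 : ℚ) ^ s - 1 ∧
    MGN r s r 0 (s - 1) 1 = (2 : ℚ) ^ s - 1 ∧
    MGN r s r (s - 1) 1 0 = (2 : ℚ) ^ s - 1 ∧
    MGN r s r 1 (s - 1) 0 = (2 : ℚ) ^ s - 1 := by
  obtain ⟨n, rfl⟩ : ∃ n, s = n + 2 := ⟨s - 2, by omega⟩
  rw [show n + 2 - 1 = n + 1 by omega]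
  exact ⟨MGN_case1 r n, MGN_case2 r n, MGN_case3 r n, MGN_case4 r n⟩
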